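/- arXiv:2008.10192 — 3 statements merged into one kernel-verified Lean document; each statement's English description precedes it below -/
import Mathlib

section
/- Suppose an oriented closed polygon P in the plane is split at a self-crossing point into two oriented closed polygons P' and P'' (each inheriting the orientation of P). Then tn(P) = tn(P') + tn(P''). -/
open Real Complex

/-- The turning angle of the closed polygon `v` at vertex `i`. -/
noncomputable def polyTurn {n : ℕ} [NeZero n] (v : Fin n → ℂ) (i : Fin n) : ℝ :=
  Complex.arg ((v (i + 1) - v i) / (v i - v (i - 1)))

/-- The turning number of a closed polygon: the sum of its turning angles divided
by `2π`. -/
noncomputable def turningNumber {n : ℕ} [NeZero n] (v : Fin n → ℂ) : ℝ :=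
  (∑ i : Fin n, polyTurn v i) / (2 * π)

private lemma fin_mk_add_one {N k kp : ℕ} [NeZero N] (hN : 2 ≤ N)
    (hk : k < N) (hkp : kp < N) (h1 : k + 1 = kp ∨ (k + 1 = N ∧ kp = 0)) :
    (⟨k, hk⟩ : Fin N) + 1 = ⟨kp, hkp⟩ := by
  apply Fin.ext
  rw [Fin.add_def]
  simp only [Fin.val_one', Nat.mod_eq_of_lt (show 1 < N by omega)]
  show (k + 1) % N = kp
  rcases h1 with h | ⟨h, h'⟩
  · rw [h]; exact Nat.mod_eq_of_lt hkp
  · rw [h, h', Nat.mod_self]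

private lemma fin_mk_sub_one {N k km : ℕ} [NeZero N] (hN : 2 ≤ N)
    (hk : k < N) (hkm : km < N) (h2 : k = km + 1 ∨ (k = 0 ∧ km = N - 1)) :
    (⟨k, hk⟩ : Fin N) - 1 = ⟨km, hkm⟩ := by
  apply Fin.ext
  rw [Fin.sub_def]
  simp only [Fin.val_one', Nat.mod_eq_of_lt (show 1 < N by omega)]
  show (N - 1 + k) % N = km
  rcases h2 with h | ⟨h, h'⟩
  · rw [h, show N - 1 + (km + 1) = km + 1 * N by omega, Nat.add_mul_mod_self_right]
    exact Nat.mod_eq_of_lt (by omega)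
  · rw [h, h', Nat.add_zero]
    exact Nat.mod_eq_of_lt (by omega)

private lemma polyTurn_mk {N : ℕ} [NeZero N] (hN : 2 ≤ N) (v : Fin N → ℂ)
    (k kp km : ℕ) (hk : k < N) (hkp : kp < N) (hkm : km < N)
    (h1 : k + 1 = kp ∨ (k + 1 = N ∧ kp = 0))
    (h2 : k = km + 1 ∨ (k = 0 ∧ km = N - 1)) :
    polyTurn v ⟨k, hk⟩ =
      ((v ⟨kp, hkp⟩ - v ⟨k, hk⟩) / (v ⟨k, hk⟩ - v ⟨km, hkm⟩)).arg := by
  rw [polyTurn, fin_mk_add_one hN hk hkp h1, fin_mk_sub_one hN hk hkm h2]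

private lemma argMulLeft {r : ℝ} (hr : 0 < r) (x z : ℂ) :
    (((r:ℂ) * x) / z).arg = (x / z).arg := by
  rw [mul_div_assoc, Complex.arg_real_mul _ hr]

private lemma argMulRight {r : ℝ} (hr : 0 < r) (x z : ℂ) :
    (x / ((r:ℂ) * z)).arg = (x / z).arg := by
  rw [show x / ((r:ℂ) * z) = ((r⁻¹:ℝ):ℂ) * (x / z) by push_cast; field_simp,
    Complex.arg_real_mul _ (by positivity)]

private lemma argCancel {z w : ℂ} (him : (w / z).im ≠ 0) :
    (z / w).arg + (w / z).arg = 0 := by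
  rw [show z / w = (w / z)⁻¹ by rw [inv_div], Complex.arg_inv]
  have h : (w / z).arg ≠ π := by
    intro h
    exact him (Complex.arg_eq_pi_iff.mp h).2
  rw [if_neg h]; ring

/-- Splitting an oriented closed polygon `v = (v 0, …, v (n-1))` at a self-crossing
point `c` of the edge from `v (m-1)` to `v m` and the edge from `v (n-1)` to `v 0`
yields the two closed polygons `(c, v m, …, v (n-1))` and `(c, v 0, …, v (m-1))`,
whose turning numbers sum to the turning number of `v`. -/
theorem turningNumber_split {n m : ℕ} [NeZero n] (hm2 : 2 ≤ m) (hmn : m + 2 ≤ n)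
    (v : Fin n → ℂ)
    (hnd : ∀ i : Fin n, v (i + 1) ≠ v i)
    (c : ℂ)
    (hc1 : c ∈ openSegment ℝ (v ⟨m - 1, by omega⟩) (v ⟨m, by omega⟩))
    (hc2 : c ∈ openSegment ℝ (v ⟨n - 1, by omega⟩) (v ⟨0, by omega⟩))
    (htrans : ∀ r : ℝ,
      v ⟨0, by omega⟩ - v ⟨n - 1, by omega⟩ ≠ r • (v ⟨m, by omega⟩ - v ⟨m - 1, by omega⟩)) :
    turningNumber v =
      turningNumber (Fin.cons c (fun i : Fin (n - m) => v ⟨m + i.val, by omega⟩)) +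
      turningNumber (Fin.cons c (fun i : Fin m => v ⟨i.val, by omega⟩)) := by
  obtain ⟨a₁, b₁, ha₁, hb₁, hab₁, hcc₁⟩ := hc1
  obtain ⟨a₂, b₂, ha₂, hb₂, hab₂, hcc₂⟩ := hc2
  have hNn : 2 ≤ n := by omega
  have hN1 : 2 ≤ n - m + 1 := by omega
  have hN2 : 2 ≤ m + 1 := by omega
  set W : Fin (n - m + 1) → ℂ :=
    Fin.cons c (fun i : Fin (n - m) => v ⟨m + i.val, by omega⟩) with hWdef
  set U : Fin (m + 1) → ℂ :=
    Fin.cons c (fun i : Fin m => v ⟨i.val, by omega⟩) with hUdef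
  set F : ℕ → ℝ := fun i => if h : i < n then polyTurn v ⟨i, h⟩ else 0 with hFdef
  set G1 : ℕ → ℝ := fun i => if h : i < n - m + 1 then polyTurn W ⟨i, h⟩ else 0 with hG1def
  set G2 : ℕ → ℝ := fun i => if h : i < m + 1 then polyTurn U ⟨i, h⟩ else 0 with hG2def
  -- evaluations of W and U
  have hW0 : W ⟨0, by omega⟩ = c := rfl
  have hU0 : U ⟨0, by omega⟩ = c := rfl
  have hWval : ∀ (j t : ℕ) (hj : j < n - m + 1) (ht : t < n), 0 < j → t = m + j - 1 →
      W ⟨j, hj⟩ = v ⟨t, ht⟩ := by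
    intro j t hj ht h0 he
    obtain ⟨j', rfl⟩ : ∃ j', j = j' + 1 := ⟨j - 1, by omega⟩
    have hlt : m + j' < n := by omega
    show v ⟨m + j', hlt⟩ = v ⟨t, ht⟩
    exact congrArg v (Fin.ext (by simp; omega))
  have hUval : ∀ (j t : ℕ) (hj : j < m + 1) (ht : t < n), 0 < j → t = j - 1 →
      U ⟨j, hj⟩ = v ⟨t, ht⟩ := by
    intro j t hj ht h0 he
    obtain ⟨j', rfl⟩ : ∃ j', j = j' + 1 := ⟨j - 1, by omega⟩
    have hlt : j' < n := by omega
    show v ⟨j', hlt⟩ = v ⟨t, ht⟩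
    exact congrArg v (Fin.ext (by simp; omega))
  -- crossing point decompositions
  have habc₁ : (a₁:ℂ) + (b₁:ℂ) = 1 := by exact_mod_cast hab₁
  have habc₂ : (a₂:ℂ) + (b₂:ℂ) = 1 := by exact_mod_cast hab₂
  have h1 : v ⟨m, by omega⟩ - c = (a₁:ℂ) * (v ⟨m, by omega⟩ - v ⟨m - 1, by omega⟩) := by
    rw [← hcc₁]
    simp only [Complex.real_smul]
    linear_combination (-(v (⟨m, by omega⟩ : Fin n))) * habc₁
  have h2 : c - v ⟨m - 1, by omega⟩ = (b₁:ℂ) * (v ⟨m, by omega⟩ - v ⟨m - 1, by omega⟩) := by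
    rw [← hcc₁]
    simp only [Complex.real_smul]
    linear_combination (v (⟨m - 1, by omega⟩ : Fin n)) * habc₁
  have h3 : c - v ⟨n - 1, by omega⟩ = (b₂:ℂ) * (v ⟨0, by omega⟩ - v ⟨n - 1, by omega⟩) := by
    rw [← hcc₂]
    simp only [Complex.real_smul]
    linear_combination (v (⟨n - 1, by omega⟩ : Fin n)) * habc₂
  have h4 : v ⟨0, by omega⟩ - c = (a₂:ℂ) * (v ⟨0, by omega⟩ - v ⟨n - 1, by omega⟩) := by
    rw [← hcc₂]
    simp only [Complex.real_smul]
    linear_combination (-(v (⟨0, by omega⟩ : Fin n))) * habc₂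
  -- nondegeneracy
  have hd1ne : v ⟨m, by omega⟩ - v ⟨m - 1, by omega⟩ ≠ 0 := by
    have h := hnd ⟨m - 1, by omega⟩
    rw [fin_mk_add_one (N := n) (k := m - 1) (kp := m) hNn (by omega) (by omega) (by omega)] at h
    exact sub_ne_zero.mpr h
  have him : ((v ⟨0, by omega⟩ - v ⟨n - 1, by omega⟩) /
      (v ⟨m, by omega⟩ - v ⟨m - 1, by omega⟩)).im ≠ 0 := by
    intro h0
    set z := (v ⟨0, by omega⟩ - v ⟨n - 1, by omega⟩) /
      (v ⟨m, by omega⟩ - v ⟨m - 1, by omega⟩) with hz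
    have hzre : z = (z.re : ℂ) := by
      apply Complex.ext
      · rw [Complex.ofReal_re]
      · rw [Complex.ofReal_im, h0]
    have heq : v ⟨0, by omega⟩ - v ⟨n - 1, by omega⟩ =
        z * (v ⟨m, by omega⟩ - v ⟨m - 1, by omega⟩) := (div_mul_cancel₀ _ hd1ne).symm
    rw [hzre] at heq
    exact htrans z.re (by rw [Complex.real_smul]; exact heq)
  -- sum conversions
  have hFsum : ∑ i : Fin n, polyTurn v i = ∑ i ∈ Finset.range n, F i := by
    rw [← Fin.sum_univ_eq_sum_range F n]
    apply Finset.sum_congr rfl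
    intro i _
    simp only [hFdef]
    rw [dif_pos i.isLt]
  have hG1sum : ∑ i : Fin (n - m + 1), polyTurn W i = ∑ i ∈ Finset.range (n - m + 1), G1 i := by
    rw [← Fin.sum_univ_eq_sum_range G1 (n - m + 1)]
    apply Finset.sum_congr rfl
    intro i _
    simp only [hG1def]
    rw [dif_pos i.isLt]
  have hG2sum : ∑ i : Fin (m + 1), polyTurn U i = ∑ i ∈ Finset.range (m + 1), G2 i := by
    rw [← Fin.sum_univ_eq_sum_range G2 (m + 1)]
    apply Finset.sum_congr rfl
    intro i _
    simp only [hG2def]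
    rw [dif_pos i.isLt]
  have hsplit : ∑ i ∈ Finset.range n, F i
      = ∑ i ∈ Finset.range m, F i + ∑ i ∈ Finset.range (n - m), F (m + i) := by
    rw [Finset.range_eq_Ico, ← Finset.sum_Ico_consecutive F (Nat.zero_le m) (by omega : m ≤ n)]
    congr 1
    · rw [Finset.range_eq_Ico]
    exact (Finset.sum_Ico_eq_sum_range F m n).trans (by rw [Finset.range_eq_Ico])
  -- key termwise identities
  have hkey1 : ∀ i, i < n - m → G1 (i + 1) = F (m + i) := by
    intro i hi
    by_cases hi0 : i = 0
    · subst hi0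
      show G1 1 = F m
      simp only [hG1def, hFdef]
      rw [dif_pos (show 1 < n - m + 1 by omega), dif_pos (show m < n by omega)]
      rw [polyTurn_mk hN1 W 1 2 0 (by omega) (by omega) (by omega) (by omega) (by omega),
          polyTurn_mk hNn v m (m + 1) (m - 1) (by omega) (by omega) (by omega) (by omega)
            (by omega),
          hWval 1 m (by omega) (by omega) (by omega) (by omega),
          hWval 2 (m + 1) (by omega) (by omega) (by omega) (by omega), hW0,
          h1, argMulRight ha₁]
    by_cases hil : i = n - m - 1
    · rw [hil, show n - m - 1 + 1 = n - m from by omega,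
        show m + (n - m - 1) = n - 1 from by omega]
      simp only [hG1def, hFdef]
      rw [dif_pos (show n - m < n - m + 1 by omega), dif_pos (show n - 1 < n by omega)]
      rw [polyTurn_mk hN1 W (n - m) 0 (n - m - 1) (by omega) (by omega) (by omega) (by omega)
            (by omega),
          polyTurn_mk hNn v (n - 1) 0 (n - 2) (by omega) (by omega) (by omega) (by omega)
            (by omega),
          hWval (n - m) (n - 1) (by omega) (by omega) (by omega) (by omega),
          hWval (n - m - 1) (n - 2) (by omega) (by omega) (by omega) (by omega), hW0,
          h3, argMulLeft hb₂]
    · simp only [hG1def, hFdef]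
      rw [dif_pos (show i + 1 < n - m + 1 by omega), dif_pos (show m + i < n by omega)]
      rw [polyTurn_mk hN1 W (i + 1) (i + 1 + 1) i (by omega) (by omega) (by omega) (by omega)
            (by omega),
          polyTurn_mk hNn v (m + i) (m + i + 1) (m + i - 1) (by omega) (by omega) (by omega)
            (by omega) (by omega),
          hWval (i + 1) (m + i) (by omega) (by omega) (by omega) (by omega),
          hWval (i + 1 + 1) (m + i + 1) (by omega) (by omega) (by omega) (by omega),
          hWval i (m + i - 1) (by omega) (by omega) (by omega) (by omega)]
  have hkey2 : ∀ i, i < m → G2 (i + 1) = F i := by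
    intro i hi
    by_cases hi0 : i = 0
    · subst hi0
      show G2 1 = F 0
      simp only [hG2def, hFdef]
      rw [dif_pos (show 1 < m + 1 by omega), dif_pos (show 0 < n by omega)]
      rw [polyTurn_mk hN2 U 1 2 0 (by omega) (by omega) (by omega) (by omega) (by omega),
          polyTurn_mk hNn v 0 1 (n - 1) (by omega) (by omega) (by omega) (by omega) (by omega),
          hUval 1 0 (by omega) (by omega) (by omega) (by omega),
          hUval 2 1 (by omega) (by omega) (by omega) (by omega), hU0,
          h4, argMulRight ha₂]
    by_cases hil : i = m - 1
    · rw [hil, show m - 1 + 1 = m from by omega]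
      simp only [hG2def, hFdef]
      rw [dif_pos (show m < m + 1 by omega), dif_pos (show m - 1 < n by omega)]
      rw [polyTurn_mk hN2 U m 0 (m - 1) (by omega) (by omega) (by omega) (by omega) (by omega),
          polyTurn_mk hNn v (m - 1) m (m - 2) (by omega) (by omega) (by omega) (by omega)
            (by omega),
          hUval m (m - 1) (by omega) (by omega) (by omega) (by omega),
          hUval (m - 1) (m - 2) (by omega) (by omega) (by omega) (by omega), hU0,
          h2, argMulLeft hb₁]
    · simp only [hG2def, hFdef]
      rw [dif_pos (show i + 1 < m + 1 by omega), dif_pos (show i < n by omega)]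
      rw [polyTurn_mk hN2 U (i + 1) (i + 1 + 1) i (by omega) (by omega) (by omega) (by omega)
            (by omega),
          polyTurn_mk hNn v i (i + 1) (i - 1) (by omega) (by omega) (by omega) (by omega)
            (by omega),
          hUval (i + 1) i (by omega) (by omega) (by omega) (by omega),
          hUval (i + 1 + 1) (i + 1) (by omega) (by omega) (by omega) (by omega),
          hUval i (i - 1) (by omega) (by omega) (by omega) (by omega)]
  -- cancellation of the two angles at c
  have hcancel : G1 0 + G2 0 = 0 := by
    simp only [hG1def, hG2def]
    rw [dif_pos (show 0 < n - m + 1 by omega), dif_pos (show 0 < m + 1 by omega)]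
    rw [polyTurn_mk hN1 W 0 1 (n - m) (by omega) (by omega) (by omega) (by omega) (by omega),
        polyTurn_mk hN2 U 0 1 m (by omega) (by omega) (by omega) (by omega) (by omega),
        hWval 1 m (by omega) (by omega) (by omega) (by omega),
        hWval (n - m) (n - 1) (by omega) (by omega) (by omega) (by omega), hW0,
        hUval 1 0 (by omega) (by omega) (by omega) (by omega),
        hUval m (m - 1) (by omega) (by omega) (by omega) (by omega), hU0,
        h1, h3, h4, h2, argMulLeft ha₁, argMulRight hb₂, argMulLeft ha₂, argMulRight hb₁]
    exact argCancel him
  -- assemble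
  have e1 : ∑ i ∈ Finset.range (n - m), G1 (i + 1) = ∑ i ∈ Finset.range (n - m), F (m + i) :=
    Finset.sum_congr rfl fun i hi => hkey1 i (Finset.mem_range.mp hi)
  have e2 : ∑ i ∈ Finset.range m, G2 (i + 1) = ∑ i ∈ Finset.range m, F i :=
    Finset.sum_congr rfl fun i hi => hkey2 i (Finset.mem_range.mp hi)
  simp only [turningNumber]
  rw [← add_div]
  congr 1
  rw [hFsum, hG1sum, hG2sum, Finset.sum_range_succ', Finset.sum_range_succ', e1, e2, hsplit]
  linarith [hcancel]
end

section
/- Let A = (α_0,...,α_{n-1}) with α_i ∈ (−π,π), ∑ α_i ≡ 0 (mod 2π), and set β_i = ∑_{j≤i} α_j mod 2π and u_i = (cos β_i, sin β_i). If there exist λ_0,...,λ_{n-1} > 0 with ∑ λ_i u_i = 0, then there exists a closed polygon in R² with n vertices whose turning angle at v_i is α_i for all i, namely the polygon with edge vectors λ_i u_i. -/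
open Real Complex Finset

/-- Given an angle sequence `α ∈ (-π,π)^n` with `∑ α i ≡ 0 (mod 2π)`, partial-sum
directions `u i = (cos β i, sin β i)` with `β i = ∑_{j ≤ i} α j`, and strictly positive
coefficients `λ i` with `∑ λ i • u i = 0`, the closed polygon with vertices
`v k = ∑_{i < k} λ i • u i` (hence edge vectors `λ i • u i`) realizes `α`, i.e. its
turning angle at every vertex `i` equals `α i`. -/
theorem polygon_of_positive_combination {n : ℕ} [NeZero n]
    (α : Fin n → ℝ) (hα : ∀ i : Fin n, α i ∈ Set.Ioo (-π) π)
    (hsum : ∃ m : ℤ, ∑ i : Fin n, α i = 2 * m * π)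
    (β : Fin n → ℝ) (hβ : ∀ i : Fin n, β i = ∑ j ∈ Finset.Iic i, α j)
    (u : Fin n → ℂ) (hu : ∀ i : Fin n, u i = Complex.exp ((β i : ℂ) * Complex.I))
    (l : Fin n → ℝ) (hl : ∀ i : Fin n, 0 < l i)
    (hcl : ∑ i : Fin n, l i • u i = 0)
    (v : Fin n → ℂ) (hv : ∀ k : Fin n, v k = ∑ i ∈ Finset.Iio k, l i • u i) :
    (∀ i : Fin n, v (i + 1) - v i = l i • u i) ∧
      (∀ i : Fin n, polyTurn v i = α i) := by
  have hn : 0 < n := Nat.pos_of_ne_zero (NeZero.ne n)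
  obtain ⟨N, rfl⟩ : ∃ N, n = N + 1 := ⟨n - 1, by omega⟩
  have hedge : ∀ i : Fin (N + 1), v (i + 1) - v i = l i • u i := by
    intro i
    rcases eq_or_ne i (Fin.last N) with rfl | hi
    · have hv0 : v (Fin.last N + 1) = 0 := by
        rw [Fin.last_add_one, hv]
        have he : Finset.Iio (0 : Fin (N + 1)) = ∅ := by
          ext j; simp
        simp [he]
      have huniv : (Finset.univ : Finset (Fin (N + 1)))
          = insert (Fin.last N) (Finset.Iio (Fin.last N)) := by
        ext j
        simp only [Finset.mem_univ, Finset.mem_insert, Finset.mem_Iio, true_iff]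
        rcases (Fin.le_last j).lt_or_eq with h | h
        · exact Or.inr h
        · exact Or.inl h
      rw [huniv, Finset.sum_insert (fun h => absurd (Finset.mem_Iio.mp h) (lt_irrefl _))] at hcl
      rw [hv0, hv]
      linear_combination -hcl
    · have hval : ((i + 1 : Fin (N + 1)) : ℕ) = (i : ℕ) + 1 := by
        rw [Fin.val_add_one, if_neg hi]
      have h1 : Finset.Iio (i + 1) = insert i (Finset.Iio i) := by
        ext j
        have hj := j.isLt; have hii := i.isLt
        simp only [Finset.mem_insert, Finset.mem_Iio, Fin.lt_def, Fin.ext_iff, hval]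
        omega
      rw [hv, hv, h1, Finset.sum_insert (fun h => absurd (Finset.mem_Iio.mp h) (lt_irrefl _))]
      ring
  refine ⟨hedge, ?_⟩
  have hk : ∀ i : Fin (N + 1), ∃ k : ℤ, β i = β (i - 1) + α i + 2 * k * π := by
    intro i
    rcases eq_or_ne i 0 with rfl | hi
    · obtain ⟨m, hm⟩ := hsum
      refine ⟨-m, ?_⟩
      have h1 : β 0 = α 0 := by
        rw [hβ]
        have h0 : Finset.Iic (0 : Fin (N + 1)) = {0} := by
          ext j; simp only [Finset.mem_Iic, Finset.mem_singleton, Fin.le_zero_iff]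
        simp [h0]
      have h2 : Finset.Iic ((0 : Fin (N + 1)) - 1) = Finset.univ := by
        have hlast : (0 : Fin (N + 1)) - 1 = Fin.last N := by
          ext; simp [Fin.coe_sub_one]
        rw [hlast]
        ext j; simp [Fin.le_last]
      rw [h1, hβ, h2, hm]
      push_cast; ring
    · refine ⟨0, ?_⟩
      have hi0 : (i : ℕ) ≠ 0 := fun h => hi (Fin.ext (by simpa using h))
      have hval : ((i - 1 : Fin (N + 1)) : ℕ) = (i : ℕ) - 1 := by
        rw [Fin.coe_sub_one, if_neg hi]
      have h1 : Finset.Iic i = insert i (Finset.Iic (i - 1)) := by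
        ext j
        have hj := j.isLt; have hii := i.isLt
        simp only [Finset.mem_Iic, Finset.mem_insert, Fin.le_def, Fin.ext_iff, hval]
        omega
      have h2 : i ∉ Finset.Iic (i - 1) := by
        have hii := i.isLt
        simp only [Finset.mem_Iic, Fin.le_def, hval]
        omega
      rw [hβ, hβ, h1, Finset.sum_insert h2]
      push_cast; ring
  intro i
  have e1 := hedge i
  have e2 : v i - v (i - 1) = l (i - 1) • u (i - 1) := by
    have h := hedge (i - 1)
    rwa [sub_add_cancel] at h
  obtain ⟨k, hkk⟩ := hk i
  have hpos : (0 : ℝ) < l i / l (i - 1) := div_pos (hl i) (hl (i - 1))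
  have hexp : Complex.exp ((β i : ℂ) * Complex.I) =
      Complex.exp ((β (i - 1) : ℂ) * Complex.I) * Complex.exp ((α i : ℂ) * Complex.I) := by
    rw [← Complex.exp_add]
    have h2 : (β i : ℂ) * Complex.I =
        ((β (i - 1) : ℂ) * Complex.I + (α i : ℂ) * Complex.I)
          + (k : ℂ) * (2 * (π : ℂ) * Complex.I) := by
      have hb : (β i : ℂ) = (β (i - 1) : ℂ) + (α i : ℂ) + 2 * (k : ℂ) * (π : ℂ) := by
        exact_mod_cast congrArg Complex.ofReal hkk
      rw [hb]; ring
    rw [h2, Complex.exp_add, Complex.exp_int_mul_two_pi_mul_I, mul_one]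
  have key : (l i • u i) / (l (i - 1) • u (i - 1)) =
      ((l i / l (i - 1) : ℝ) : ℂ) * Complex.exp ((α i : ℂ) * Complex.I) := by
    rw [hu, hu, Complex.real_smul, Complex.real_smul, hexp]
    have hne1 : Complex.exp ((β (i - 1) : ℂ) * Complex.I) ≠ 0 := Complex.exp_ne_zero _
    have hne2 : (l (i - 1) : ℂ) ≠ 0 := by exact_mod_cast (hl (i - 1)).ne'
    push_cast
    field_simp
  rw [polyTurn, e1, e2, key, Complex.arg_real_mul _ hpos, Complex.exp_mul_I]
  exact Complex.arg_cos_add_sin_mul_I ⟨(hα i).1, (hα i).2.le⟩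
end

section
/- If a closed polygon P ⊂ R^d (d ≥ 2) has turning angles α_0,...,α_{n-1} ∈ (0,π), then ∑_{i=0}^{n-1} α_i ≥ 2π. -/
open Real

open InnerProductGeometry

section Aux

variable {V : Type*} [NormedAddCommGroup V] [InnerProductSpace ℝ V]

local notation "⟪" x ", " y "⟫" => @inner ℝ V _ x y

/-- Triangle inequality for unit vectors. -/
lemma angle_triangle_unit {u v w : V} (hu : ‖u‖ = 1) (hv : ‖v‖ = 1) (hw : ‖w‖ = 1) :
    angle u w ≤ angle u v + angle v w := by
  set α := angle u v with hα
  set β := angle v w with hβ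
  rcases le_or_gt π (α + β) with h | h
  · exact le_trans (angle_le_pi u w) h
  -- cos(α+β) ≤ ⟪u,w⟫ = cos (angle u w)
  set a := ⟪u, v⟫ with ha
  set b := ⟪v, w⟫ with hb
  have hcosα : Real.cos α = a := by rw [hα, cos_angle, hu, hv]; simp; rfl
  have hcosβ : Real.cos β = b := by rw [hβ, cos_angle, hv, hw]; simp; rfl
  have hsinα : Real.sin α = Real.sqrt (1 - a ^ 2) := by
    rw [hα, angle, hu, hv]
    simp [Real.sin_arccos]
    rfl
  have hsinβ : Real.sin β = Real.sqrt (1 - b ^ 2) := by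
    rw [hβ, angle, hv, hw]
    simp [Real.sin_arccos]
    rfl
  set p := u - a • v with hp
  set q := w - b • v with hq
  have hnp : ‖p‖ = Real.sqrt (1 - a ^ 2) := by
    have h2 : ‖p‖ ^ 2 = 1 - a ^ 2 := by
      rw [hp, @norm_sub_sq_real]
      rw [real_inner_smul_right, norm_smul, hu, hv]
      simp [← ha]
      ring
    rw [← h2, Real.sqrt_sq (norm_nonneg _)]
  have hnq : ‖q‖ = Real.sqrt (1 - b ^ 2) := by
    have h2 : ‖q‖ ^ 2 = 1 - b ^ 2 := by
      rw [hq, @norm_sub_sq_real, real_inner_smul_right, norm_smul, hw, hv]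
      have hwv : (⟪w, v⟫ : ℝ) = b := by rw [hb]; exact real_inner_comm v w
      rw [hwv]
      simp
      ring
    rw [← h2, Real.sqrt_sq (norm_nonneg _)]
  have hpq : ⟪p, q⟫ = ⟪u, w⟫ - a * b := by
    rw [hp, hq]
    simp [inner_sub_left, inner_sub_right, real_inner_smul_left, real_inner_smul_right,
      real_inner_self_eq_norm_sq, hv, real_inner_comm v w, ← ha, ← hb]
  have hCS : -(‖p‖ * ‖q‖) ≤ ⟪p, q⟫ := neg_le_of_neg_le (by
    have := abs_real_inner_le_norm p q
    linarith [neg_abs_le ⟪p, q⟫])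
  have hkey : Real.cos (α + β) ≤ Real.cos (angle u w) := by
    rw [Real.cos_add, hcosα, hcosβ, hsinα, hsinβ, cos_angle, hu, hw]
    have : -(Real.sqrt (1 - a ^ 2) * Real.sqrt (1 - b ^ 2)) ≤ ⟪u, w⟫ - a * b := by
      rw [← hpq, ← hnp, ← hnq]; exact hCS
    simp only [mul_one, div_one]
    linarith
  by_contra hlt
  push_neg at hlt
  have h1 : Real.cos (angle u w) < Real.cos (α + β) :=
    Real.strictAntiOn_cos ⟨add_nonneg (angle_nonneg u v) (angle_nonneg v w), h.le⟩ ⟨angle_nonneg u w, angle_le_pi u w⟩ hlt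
  linarith

/-- Triangle inequality for vector angles. -/
lemma angle_triangle' (x y z : V) : angle x z ≤ angle x y + angle y z := by
  rcases eq_or_ne x 0 with rfl | hx
  · rw [angle_zero_left]
    linarith [angle_nonneg y z, angle_nonneg (0 : V) y,
      show angle (0 : V) y = π / 2 from angle_zero_left y]
  rcases eq_or_ne y 0 with rfl | hy
  · rw [angle_zero_right, angle_zero_left]
    linarith [angle_le_pi x z]
  rcases eq_or_ne z 0 with rfl | hz
  · rw [angle_zero_right, angle_zero_right]
    linarith [angle_nonneg x y]
  have hxu : ‖(‖x‖⁻¹ • x)‖ = 1 := by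
    rw [norm_smul, norm_inv, norm_norm, inv_mul_cancel₀ (norm_ne_zero_iff.2 hx)]
  have hyu : ‖(‖y‖⁻¹ • y)‖ = 1 := by
    rw [norm_smul, norm_inv, norm_norm, inv_mul_cancel₀ (norm_ne_zero_iff.2 hy)]
  have hzu : ‖(‖z‖⁻¹ • z)‖ = 1 := by
    rw [norm_smul, norm_inv, norm_norm, inv_mul_cancel₀ (norm_ne_zero_iff.2 hz)]
  have hxp : (0:ℝ) < ‖x‖⁻¹ := inv_pos.2 (norm_pos_iff.2 hx)
  have hyp : (0:ℝ) < ‖y‖⁻¹ := inv_pos.2 (norm_pos_iff.2 hy)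
  have hzp : (0:ℝ) < ‖z‖⁻¹ := inv_pos.2 (norm_pos_iff.2 hz)
  have e1 : angle (‖x‖⁻¹ • x) (‖z‖⁻¹ • z) = angle x z := by
    rw [angle_smul_left_of_pos _ _ hxp, angle_smul_right_of_pos _ _ hzp]
  have e2 : angle (‖x‖⁻¹ • x) (‖y‖⁻¹ • y) = angle x y := by
    rw [angle_smul_left_of_pos _ _ hxp, angle_smul_right_of_pos _ _ hyp]
  have e3 : angle (‖y‖⁻¹ • y) (‖z‖⁻¹ • z) = angle y z := by
    rw [angle_smul_left_of_pos _ _ hyp, angle_smul_right_of_pos _ _ hzp]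
  rw [← e1, ← e2, ← e3]
  exact angle_triangle_unit hxu hyu hzu

/-- Splitting an angle at the sum of the two vectors. -/
lemma angle_add_split {a b : V} (ha : a ≠ 0) (hb : b ≠ 0) :
    angle a (a + b) + angle (a + b) b = angle a b := by
  have h := angle_add_angle_sub_add_angle_sub_eq_pi a (neg_ne_zero.2 hb)
  rw [angle_neg_right, sub_neg_eq_add] at h
  have h2 : angle (-b) (-b - a) = angle b (a + b) := by
    rw [show -b - a = -(b + a) by abel, angle_neg_neg, add_comm]
  rw [h2] at h
  rw [angle_comm (a + b) b]
  linarith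

open Fin.NatCast Fin.CommRing in
lemma fenchel_key : ∀ m : ℕ, ∀ e : Fin (m + 2) → V, (∀ i, e i ≠ 0) → (∑ i, e i = 0) →
    2 * π ≤ ∑ i, angle (e i) (e (i + 1)) := by
  intro m
  induction m with
  | zero =>
    intro e h0 hs
    rw [Fin.sum_univ_two] at hs ⊢
    have h1 : e 1 = -e 0 := eq_neg_of_add_eq_zero_right hs
    rw [show (0 + 1 : Fin 2) = 1 from rfl, show (1 + 1 : Fin 2) = 0 from rfl, h1,
      angle_self_neg_of_nonzero (h0 0), angle_neg_self_of_nonzero (h0 0)]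
    linarith
  | succ m IH =>
    intro e h0 hs
    by_cases hall : ∀ i : Fin (m + 3), e (i + 1) = -e i
    · have hπ : ∀ i : Fin (m + 3), angle (e i) (e (i + 1)) = π := fun i => by
        rw [hall i]; exact angle_self_neg_of_nonzero (h0 i)
      rw [Finset.sum_congr rfl fun i _ => hπ i, Finset.sum_const, Finset.card_univ,
        Fintype.card_fin, nsmul_eq_mul]
      have hp := Real.pi_pos
      have : (2 : ℝ) ≤ ((m + 3 : ℕ) : ℝ) := by push_cast; linarith [Nat.cast_nonneg (α := ℝ) m]
      nlinarith
    · push_neg at hall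
      obtain ⟨i, hi⟩ := hall
      have hs' : e i + e (i + 1) ≠ 0 := fun h => hi (eq_neg_of_add_eq_zero_right h)
      set c : Fin (m + 3) := i + 2 with hc
      set f : Fin (m + 3) → V := fun j => e (j + c) with hf
      have hf0 : ∀ j, f j ≠ 0 := fun j => h0 _
      have hfsum : ∑ j : Fin (m + 3), f j = 0 := by
        rw [← hs]
        exact Fintype.sum_equiv (Equiv.addRight c) _ _ fun j => rfl
      set E : ℕ → V := fun j => f ((j : ℕ) : Fin (m + 3)) with hE
      have hE0 : ∀ j : ℕ, E j ≠ 0 := fun j => hf0 _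
      have hcast1 : ((m + 1 : ℕ) : Fin (m + 3)) + c = i := by
        have h2 : ((m + 1 : ℕ) : Fin (m + 3)) + 2 = 0 := by
          have : ((m + 1 : ℕ) : Fin (m + 3)) + 2 = ((m + 1 + 2 : ℕ) : Fin (m + 3)) := by
            push_cast; ring
          rw [this]
          exact Fin.natCast_self (m + 3)
        rw [hc, add_comm i 2, ← add_assoc, h2, zero_add]
      have hcast2 : ((m + 2 : ℕ) : Fin (m + 3)) + c = i + 1 := by
        have : ((m + 2 : ℕ) : Fin (m + 3)) = ((m + 1 : ℕ) : Fin (m + 3)) + 1 := by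
          push_cast; ring
        rw [this, add_right_comm, hcast1]
      have hEm1 : E (m + 1) = e i := by rw [hE]; simp only [hf]; rw [hcast1]
      have hEm2 : E (m + 2) = e (i + 1) := by rw [hE]; simp only [hf]; rw [hcast2]
      set s : V := E (m + 1) + E (m + 2) with hsdef
      have hsne : s ≠ 0 := by rw [hsdef, hEm1, hEm2]; exact hs'
      have hEtop : E (m + 3) = E 0 := by
        rw [hE]; simp only [Fin.natCast_self, Nat.cast_zero]
      -- the merged polygon
      set g : Fin (m + 2) → V := fun j => if (j : ℕ) = m + 1 then s else E j.val with hg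
      set G : ℕ → V := fun j => g ((j : ℕ) : Fin (m + 2)) with hG
      have hgval : ∀ j : Fin (m + 2), G j.val = g j := fun j => by
        simp only [hG, Fin.cast_val_eq_self]
      have hG_lt : ∀ j : ℕ, j < m + 1 → G j = E j := by
        intro j hj
        simp only [hG, hg, Fin.val_cast_of_lt (by omega : j < m + 2)]
        rw [if_neg (by omega)]
      have hG_last : G (m + 1) = s := by
        simp only [hG, hg, Fin.val_cast_of_lt (by omega : m + 1 < m + 2), if_true, reduceIte]
      have hG_top : G (m + 2) = E 0 := by
        simp only [hG, hg, show ((m + 2 : ℕ) : Fin (m + 2)) = 0 from Fin.natCast_self (m + 2),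
          Fin.val_zero]
        rw [if_neg (by omega)]
      have hg0 : ∀ j : Fin (m + 2), g j ≠ 0 := by
        intro j
        simp only [hg]
        split
        · exact hsne
        · exact hE0 _
      have hEf : ∀ j : Fin (m + 3), E j.val = f j := fun j => by
        simp only [hE, Fin.cast_val_eq_self]
      have hgsum : ∑ j : Fin (m + 2), g j = 0 := by
        have h1 : ∑ j : Fin (m + 2), g j = ∑ j ∈ Finset.range (m + 2), G j := by
          rw [← Fin.sum_univ_eq_sum_range G (m + 2)]
          exact Finset.sum_congr rfl fun j _ => (hgval j).symm
        have h2 : ∑ j ∈ Finset.range (m + 3), E j = 0 := by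
          rw [← Fin.sum_univ_eq_sum_range E (m + 3)]
          exact (Finset.sum_congr rfl fun j _ => hEf j).trans hfsum
        rw [Finset.sum_range_succ, Finset.sum_range_succ] at h2
        rw [h1, Finset.sum_range_succ,
          Finset.sum_congr rfl fun j hj => hG_lt j (Finset.mem_range.1 hj), hG_last, hsdef,
          ← add_assoc]
        exact h2
      have hGA : ∑ j : Fin (m + 2), angle (g j) (g (j + 1))
          = ∑ j ∈ Finset.range (m + 2), angle (G j) (G (j + 1)) := by
        rw [← Fin.sum_univ_eq_sum_range (fun j => angle (G j) (G (j + 1))) (m + 2)]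
        refine Finset.sum_congr rfl fun j _ => ?_
        have hj1 : G ((j : ℕ) + 1) = g (j + 1) := by
          simp only [hG]
          congr 1
        rw [hgval j, hj1]
      have hFA : ∑ j : Fin (m + 3), angle (f j) (f (j + 1))
          = ∑ j ∈ Finset.range (m + 3), angle (E j) (E (j + 1)) := by
        rw [← Fin.sum_univ_eq_sum_range (fun j => angle (E j) (E (j + 1))) (m + 3)]
        refine Finset.sum_congr rfl fun j _ => ?_
        have hj1 : E ((j : ℕ) + 1) = f (j + 1) := by
          simp only [hE]
          congr 1
        rw [hEf j, hj1]
      have hEA : ∑ i : Fin (m + 3), angle (e i) (e (i + 1))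
          = ∑ j : Fin (m + 3), angle (f j) (f (j + 1)) := by
        symm
        refine Fintype.sum_equiv (Equiv.addRight c) _ _ fun j => ?_
        show angle (e (j + c)) (e (j + 1 + c)) = angle (e (j + c)) (e (j + c + 1))
        rw [add_right_comm]
      have hGsplit : ∑ j ∈ Finset.range (m + 2), angle (G j) (G (j + 1))
          = (∑ j ∈ Finset.range m, angle (E j) (E (j + 1)))
            + angle (E m) s + angle s (E 0) := by
        rw [Finset.sum_range_succ, Finset.sum_range_succ]
        have hG_top' : G (m + 1 + 1) = E 0 := hG_top
        rw [hG_last, hG_top', hG_lt m (by omega)]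
        congr 2
        refine Finset.sum_congr rfl fun j hj => ?_
        have hj' := Finset.mem_range.1 hj
        rw [hG_lt j (by omega), hG_lt (j + 1) (by omega)]
      have hEsplit : ∑ j ∈ Finset.range (m + 3), angle (E j) (E (j + 1))
          = (∑ j ∈ Finset.range m, angle (E j) (E (j + 1)))
            + angle (E m) (E (m + 1)) + angle (E (m + 1)) (E (m + 2))
            + angle (E (m + 2)) (E 0) := by
        have hEtop' : E (m + 2 + 1) = E 0 := hEtop
        rw [show m + 3 = m + 2 + 1 from rfl, Finset.sum_range_succ, Finset.sum_range_succ,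
          Finset.sum_range_succ, hEtop']
      have htri1 : angle (E m) s ≤ angle (E m) (E (m + 1)) + angle (E (m + 1)) s :=
        angle_triangle' _ _ _
      have htri2 : angle s (E 0) ≤ angle s (E (m + 2)) + angle (E (m + 2)) (E 0) :=
        angle_triangle' _ _ _
      have hsplit : angle (E (m + 1)) s + angle s (E (m + 2))
          = angle (E (m + 1)) (E (m + 2)) := by
        rw [hsdef]
        exact angle_add_split (hE0 (m + 1)) (hE0 (m + 2))
      have hIH := IH g hg0 hgsum
      rw [hGA, hGsplit] at hIH
      show 2 * π ≤ ∑ i : Fin (m + 3), angle (e i) (e (i + 1))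
      rw [hEA, hFA, hEsplit]
      linarith

end Aux

/-- Polygonal Fenchel theorem: a closed polygon in `ℝ^d`, `d ≥ 2`, with nondegenerate
edges and turning angles `α i ∈ (0, π)` has total curvature `∑ α i ≥ 2π`. -/
theorem total_curvature_ge_two_pi {d n : ℕ} (hd : 2 ≤ d) [NeZero n] (hn : 3 ≤ n)
    (v : Fin n → EuclideanSpace ℝ (Fin d))
    (hnd : ∀ i : Fin n, v (i + 1) ≠ v i)
    (α : Fin n → ℝ) (hα : ∀ i : Fin n, α i ∈ Set.Ioo 0 π)
    (hreal : ∀ i : Fin n,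
      InnerProductGeometry.angle (v i - v (i - 1)) (v (i + 1) - v i) = α i) :
    2 * π ≤ ∑ i : Fin n, α i := by

  obtain ⟨m, rfl⟩ : ∃ m, n = m + 2 := ⟨n - 2, by omega⟩
  set e : Fin (m + 2) → EuclideanSpace ℝ (Fin d) := fun i => v (i + 1) - v i with he
  have h0 : ∀ i, e i ≠ 0 := fun i => sub_ne_zero.2 (hnd i)
  have hsum : ∑ i, e i = 0 := by
    simp only [he]
    rw [Finset.sum_sub_distrib]
    rw [Fintype.sum_equiv (Equiv.addRight (1 : Fin (m + 2))) (fun i => v (i + 1)) v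
      fun i => rfl]
    exact sub_self _
  have hα' : ∀ i : Fin (m + 2), α i = angle (e (i - 1)) (e i) := by
    intro i
    rw [← hreal i]
    congr 1
    rw [he]
    simp only [sub_add_cancel]
  have hang : ∑ i : Fin (m + 2), α i = ∑ j : Fin (m + 2), angle (e j) (e (j + 1)) := by
    rw [Finset.sum_congr rfl fun i _ => hα' i]
    symm
    refine Fintype.sum_equiv (Equiv.addRight (1 : Fin (m + 2))) _ _ fun j => ?_
    show angle (e j) (e (j + 1)) = angle (e (j + 1 - 1)) (e (j + 1))
    rw [add_sub_cancel_right]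
  rw [hang]
  exact fenchel_key m e h0 hsum
end
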